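/- Let Δ be a (d-1)-dimensional simplicial complex whose h-vector is reciprocal, i.e., h_i^Δ = h_{d-i}^Δ for 0 ≤ i ≤ d. Then the h-vector of the barycentric subdivision sd(Δ) is also reciprocal: h_j^{sd(Δ)} = h_{d-j}^{sd(Δ)} for 0 ≤ j ≤ d. -/

import Mathlib

open Finset

/-- `Δ` is an (abstract) simplicial complex: a collection of finite subsets of the
vertex set containing the empty face and closed under taking subsets. -/
def IsComplex {α : Type*} (Δ : Finset (Finset α)) : Prop :=
  ∅ ∈ Δ ∧ ∀ s ∈ Δ, ∀ t, t ⊆ s → t ∈ Δ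

/-- `Δ` has dimension `d - 1`: every face has at most `d` vertices and some face
has exactly `d` vertices. -/
def HasDim {α : Type*} (Δ : Finset (Finset α)) (d : ℕ) : Prop :=
  (∀ s ∈ Δ, s.card ≤ d) ∧ ∃ s ∈ Δ, s.card = d

/-- `fnum Δ i = f_{i-1}`, the number of faces of `Δ` with `i` vertices
(i.e. of dimension `i-1`). -/
def fnum {α : Type*} (Δ : Finset (Finset α)) (i : ℕ) : ℕ :=
  (Δ.filter (fun s => s.card = i)).card

/-- The entries of the `h`-vector of a `(d-1)`-dimensional complex:
`h_j = Σ_{i=0}^{j} (-1)^{j-i} binom(d-i, j-i) f_{i-1}`. -/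
def hnum {α : Type*} (Δ : Finset (Finset α)) (d j : ℕ) : ℤ :=
  ∑ i ∈ Finset.range (j + 1),
    (-1 : ℤ) ^ (j - i) * ((d - i).choose (j - i)) * (fnum Δ i : ℤ)

/-- The barycentric subdivision of `Δ`: the simplicial complex whose vertices are
the nonempty faces of `Δ` and whose faces are the chains of nonempty faces. -/
def sd {α : Type*} [DecidableEq α] (Δ : Finset (Finset α)) :
    Finset (Finset (Finset α)) :=
  (Δ.erase ∅).powerset.filter (fun c => ∀ s ∈ c, ∀ t ∈ c, s ⊆ t ∨ t ⊆ s)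

private lemma B1 (n : ℕ) : ∀ m : ℕ, ∑ r ∈ range (m+1), (-1:ℤ)^r * ((n+1).choose r) = (-1)^m * (n.choose m) := by
  intro m
  induction m with
  | zero => simp
  | succ m ih =>
    rw [sum_range_succ, ih, Nat.choose_succ_succ' n m]
    push_cast
    ring

private lemma B2 (d : ℕ) : ∀ j : ℕ, j ≤ d → ∀ i : ℕ, i ≤ d →
    ∑ r ∈ range (j+1), (-1:ℤ)^r * ((d+1).choose r) * ((j-r).choose i) =
    if i ≤ j then (-1:ℤ)^(j-i) * ((d-i).choose (j-i)) else 0 := by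
  intro j
  induction j with
  | zero =>
    intro _ i _
    rcases Nat.eq_zero_or_pos i with rfl | hi
    · simp
    · simp [Nat.choose_eq_zero_of_lt hi, Nat.not_le.mpr hi]
  | succ j ih =>
    intro hj i hi
    have hj' : j ≤ d := by omega
    rcases Nat.eq_zero_or_pos i with rfl | hipos
    · have : ∀ r ∈ range (j+2), (-1:ℤ)^r * ((d+1).choose r) * ((j+1-r).choose 0)
          = (-1:ℤ)^r * ((d+1).choose r) := by
        intro r _; simp
      rw [sum_congr rfl this, B1 d (j+1)]
      simp
    · obtain ⟨i', rfl⟩ : ∃ i', i = i' + 1 := ⟨i - 1, by omega⟩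
      rw [sum_range_succ]
      have hlast : ((j+1-(j+1)).choose (i'+1) : ℤ) = 0 := by simp
      rw [hlast, mul_zero, add_zero]
      have hsplit : ∀ r ∈ range (j+1),
          (-1:ℤ)^r * ((d+1).choose r) * ((j+1-r).choose (i'+1))
          = (-1:ℤ)^r * ((d+1).choose r) * ((j-r).choose i')
            + (-1:ℤ)^r * ((d+1).choose r) * ((j-r).choose (i'+1)) := by
        intro r hr
        rw [mem_range] at hr
        have h1 : j + 1 - r = (j - r) + 1 := by omega
        rw [h1, Nat.choose_succ_succ (j-r) i']
        push_cast
        ring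
      rw [sum_congr rfl hsplit, sum_add_distrib, ih hj' i' (by omega), ih hj' (i'+1) (by omega)]
      by_cases hc1 : i' + 1 ≤ j
      · rw [if_pos (by omega : i' ≤ j), if_pos hc1, if_pos (by omega : i'+1 ≤ j+1)]
        have e1 : j - i' = (j - (i'+1)) + 1 := by omega
        have e2 : d - i' = (d - (i'+1)) + 1 := by omega
        have e3 : j + 1 - (i'+1) = (j - (i'+1)) + 1 := by omega
        rw [e1, e2, e3, Nat.choose_succ_succ (d - (i'+1)) (j - (i'+1))]
        push_cast
        ring
      · by_cases hc2 : i' ≤ j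
        · -- i' = j
          have : i' = j := by omega
          subst this
          rw [if_pos le_rfl, if_neg hc1, if_pos (by omega : i'+1 ≤ i'+1)]
          simp
        · rw [if_neg hc2, if_neg hc1, if_neg (by omega : ¬ i'+1 ≤ j+1)]
          simp

private lemma B3 (r i : ℕ) :
    ∑ s ∈ range (r+1), (-1:ℤ)^s * (r.choose s) * (s.choose i) = if i = r then (-1:ℤ)^r else 0 := by
  by_cases hir : i ≤ r
  · rw [← Finset.sum_range_add_sum_Ico _ (show i ≤ r+1 by omega)]
    have h1 : ∑ s ∈ range i, (-1:ℤ)^s * (r.choose s) * (s.choose i) = 0 := by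
      apply sum_eq_zero
      intro s hs
      rw [mem_range] at hs
      rw [Nat.choose_eq_zero_of_lt hs]
      simp
    rw [h1, zero_add, Finset.sum_Ico_eq_sum_range]
    have h2 : ∀ u ∈ range (r+1-i), (-1:ℤ)^(i+u) * (r.choose (i+u)) * ((i+u).choose i)
        = ((-1:ℤ)^i * (r.choose i)) * ((-1:ℤ)^u * ((r-i).choose u)) := by
      intro u hu
      rw [mem_range] at hu
      have hc := Nat.choose_mul (n := r) (show i ≤ i+u by omega)
      have : i + u - i = u := by omega
      rw [this] at hc
      have : ((r.choose (i+u)) * ((i+u).choose i) : ℤ) = (r.choose i) * ((r-i).choose u) := by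
        exact_mod_cast congrArg (Nat.cast : ℕ → ℤ) hc
      calc (-1:ℤ)^(i+u) * (r.choose (i+u)) * ((i+u).choose i)
          = (-1:ℤ)^(i+u) * ((r.choose (i+u)) * ((i+u).choose i)) := by ring
        _ = (-1:ℤ)^(i+u) * ((r.choose i) * ((r-i).choose u)) := by rw [this]
        _ = ((-1:ℤ)^i * (r.choose i)) * ((-1:ℤ)^u * ((r-i).choose u)) := by
            rw [pow_add]; ring
    rw [sum_congr rfl h2, ← mul_sum]
    have h3 : r + 1 - i = (r - i) + 1 := by omega
    rw [h3, Int.alternating_sum_range_choose]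
    by_cases hie : i = r
    · subst hie; simp
    · rw [if_neg (by omega : ¬ r - i = 0), if_neg hie, mul_zero]
  · rw [if_neg (by omega : ¬ i = r)]
    apply sum_eq_zero
    intro s hs
    rw [mem_range] at hs
    rw [Nat.choose_eq_zero_of_lt (by omega : s < i)]
    simp

private lemma B4 (s i : ℕ) : ((s+i).choose i) = ∑ q ∈ range (i+1), (i.choose q) * (s.choose q) := by
  rw [Nat.add_choose_eq, Finset.Nat.sum_antidiagonal_eq_sum_range_succ_mk]
  apply sum_congr rfl
  intro q hq
  rw [mem_range] at hq
  rw [Nat.choose_symm (by omega : q ≤ i)]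
  ring

/-- extended binomial coefficient `binom(m, i)` for integer `m`. -/
private def ib (m : ℤ) (i : ℕ) : ℤ :=
  if 0 ≤ m then (m.toNat.choose i : ℤ) else (-1)^i * (((-1 - m).toNat + i).choose i)

private lemma ib_nat (m : ℕ) (i : ℕ) : ib m i = (m.choose i : ℤ) := by
  simp [ib]

private lemma ib_neg (s : ℕ) (i : ℕ) : ib (-1 - s) i = (-1)^i * ((s+i).choose i : ℤ) := by
  have h : ¬ (0:ℤ) ≤ -1 - s := by omega
  have h2 : (-1 - (-1 - (s:ℤ))).toNat = s := by omega
  rw [ib, if_neg h, h2]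

private lemma ib_zero (m : ℤ) : ib m 0 = 1 := by
  by_cases h : 0 ≤ m <;> simp [ib, h]

private lemma ib_pascal (m : ℤ) (i : ℕ) : ib m (i+1) = ib (m-1) (i+1) + ib (m-1) i := by
  rcases lt_trichotomy m 0 with hm | hm | hm
  · obtain ⟨s, hs⟩ : ∃ s : ℕ, m = -1 - s := ⟨(-1-m).toNat, by omega⟩
    subst hs
    have h1 : (-1 - (s:ℤ)) - 1 = -1 - ((s+1 : ℕ) : ℤ) := by push_cast; ring
    rw [h1, ib_neg, ib_neg, ib_neg]
    have h2 : s + 1 + (i+1) = (s + (i+1)) + 1 := by ring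
    have h3 : (s+1+(i+1)).choose (i+1) = (s+(i+1)).choose i + (s+(i+1)).choose (i+1) := by
      rw [h2, Nat.choose_succ_succ' (s + (i+1)) i]
    have h4 : s + 1 + i = s + (i + 1) := by ring
    rw [h3, h4]
    push_cast
    ring
  · subst hm
    have h1 : (0:ℤ) - 1 = -1 - ((0:ℕ):ℤ) := by norm_num
    have h0 : (0:ℤ) = ((0:ℕ):ℤ) := by norm_num
    rw [h1, ib_neg, ib_neg, h0, ib_nat]
    simp [pow_succ]
  · obtain ⟨s, hs⟩ : ∃ s : ℕ, m = (s:ℤ) + 1 := ⟨(m-1).toNat, by omega⟩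
    subst hs
    have h1 : ((s:ℤ)+1) - 1 = ((s:ℕ):ℤ) := by ring
    have h2 : ((s:ℤ)+1) = (((s+1:ℕ)):ℤ) := by push_cast; ring
    rw [h1, h2, ib_nat, ib_nat, ib_nat, Nat.choose_succ_succ' s i]
    push_cast
    ring

private lemma sum_pascal_split (n' : ℕ) (G : ℤ → ℤ) (a : ℤ) :
    ∑ r ∈ range (n'+2), (-1:ℤ)^r * ((n'+1).choose r) * G (a - r)
    = ∑ r ∈ range (n'+1), (-1:ℤ)^r * (n'.choose r) * (G (a-r) - G (a-1-r)) := by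
  set f : ℕ → ℤ := fun r => (-1:ℤ)^r * (n'.choose r) * G (a - r) with hf
  have h3 : f (n'+1) = 0 := by
    simp [hf, Nat.choose_succ_self n']
  have key : ∑ r ∈ range (n'+1), f (r+1) = (∑ r ∈ range (n'+1), f r) - f 0 := by
    have h1 := Finset.sum_range_succ' f (n'+1)
    have h2 := Finset.sum_range_succ f (n'+1)
    rw [h2, h3, add_zero] at h1
    linarith [h1]
  have e2 : ∀ r ∈ range (n'+1),
      (-1:ℤ)^(r+1) * (((n'+1).choose (r+1) : ℕ) : ℤ) * G (a - ((r+1 : ℕ) : ℤ))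
      = -((-1:ℤ)^r * (n'.choose r) * G (a-1-r)) + f (r+1) := by
    intro r _
    have harg : a - (((r+1 : ℕ)) : ℤ) = a - 1 - r := by push_cast; ring
    rw [hf]
    simp only []
    rw [harg, Nat.choose_succ_succ' n' r]
    push_cast
    ring
  rw [Finset.sum_range_succ'
      (fun r => (-1:ℤ)^r * (((n'+1).choose r : ℕ) : ℤ) * G (a - r)) (n'+1)]
  rw [sum_congr rfl e2, sum_add_distrib, key]
  have hf0 : f 0 = G a := by simp [hf]
  have hlast : (-1:ℤ)^0 * (((n'+1).choose 0 : ℕ) : ℤ) * G (a - ((0:ℕ):ℤ)) = G a := by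
    simp
  rw [hf0, hlast]
  have expand : ∀ r ∈ range (n'+1),
      (-1:ℤ)^r * (n'.choose r) * (G (a-r) - G (a-1-r))
      = f r - (-1:ℤ)^r * (n'.choose r) * G (a-1-r) := by
    intro r _
    rw [hf]
    simp only []
    ring
  rw [sum_congr rfl expand, sum_sub_distrib, sum_neg_distrib]
  ring

private lemma B5a : ∀ i : ℕ, ∀ n : ℕ, ∀ a : ℤ, i < n →
    ∑ r ∈ range (n+1), (-1:ℤ)^r * (n.choose r) * (a - r)^i = 0 := by
  intro i
  induction i using Nat.strong_induction_on with
  | _ i IH =>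
    intro n a hin
    obtain ⟨n', rfl⟩ : ∃ n', n = n' + 1 := ⟨n - 1, by omega⟩
    rw [show n' + 1 + 1 = n' + 2 by ring, sum_pascal_split n' (fun x => x^i) a]
    rcases Nat.eq_zero_or_pos i with rfl | hi
    · simp
    · have h1 : ∀ r ∈ range (n'+1), (-1:ℤ)^r * (n'.choose r) * ((a-r)^i - (a-1-r)^i)
          = ∑ s ∈ range i, (i.choose s) * ((-1:ℤ)^r * (n'.choose r) * ((a-1)-r)^s) := by
        intro r _
        have hb : (a-r)^i = ∑ s ∈ range (i+1), (a-1-r)^s * 1^(i-s) * (i.choose s) := by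
          have : a - r = (a-1-r) + 1 := by ring
          rw [this, add_pow]
        rw [sum_range_succ] at hb
        simp only [one_pow, mul_one, Nat.choose_self] at hb
        have hb2 : (a-r)^i - (a-1-r)^i = ∑ s ∈ range i, (a-1-r)^s * (i.choose s) := by
          rw [hb]; ring
        rw [hb2, mul_sum, ← sum_attach (range i)]
        rw [← sum_attach (range i) (fun s => ((i.choose s):ℤ) * ((-1:ℤ)^r * (n'.choose r) * ((a-1)-r)^s))]
        apply sum_congr rfl
        intro s _
        have : a - 1 - (r:ℤ) = (a-1) - r := by ring
        rw [this]
        ring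
      rw [sum_congr rfl h1, sum_comm]
      apply sum_eq_zero
      intro s hs
      rw [mem_range] at hs
      rw [← mul_sum, IH s hs n' (a-1) (by omega), mul_zero]

private lemma B5b : ∀ i : ℕ, ∀ n : ℕ, ∀ a : ℤ, i < n →
    ∑ r ∈ range (n+1), (-1:ℤ)^r * (n.choose r) * ib (a - r) i = 0 := by
  intro i
  induction i with
  | zero =>
    intro n a hin
    simp only [ib_zero, mul_one]
    have := Int.alternating_sum_range_choose (n := n)
    rw [if_neg (by omega : ¬ n = 0)] at this
    exact this
  | succ i IH =>
    intro n a hin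
    obtain ⟨n', rfl⟩ : ∃ n', n = n' + 1 := ⟨n - 1, by omega⟩
    rw [show n' + 1 + 1 = n' + 2 by ring, sum_pascal_split n' (fun x => ib x (i+1)) a]
    have h1 : ∀ r ∈ range (n'+1), (-1:ℤ)^r * (n'.choose r) * (ib (a-r) (i+1) - ib (a-1-r) (i+1))
        = (-1:ℤ)^r * (n'.choose r) * ib ((a-1) - r) i := by
      intro r _
      have hp := ib_pascal (a - r) i
      have : a - (r:ℤ) - 1 = a - 1 - r := by ring
      rw [this] at hp
      have : ib (a-r) (i+1) - ib (a-1-r) (i+1) = ib (a-1-r) i := by rw [hp]; ring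
      rw [this]
    rw [sum_congr rfl h1, IH n' (a-1) (by omega)]

section Comb

variable {α : Type*} [DecidableEq α]

private lemma mem_sd {Δ : Finset (Finset α)} {c : Finset (Finset α)} :
    c ∈ sd Δ ↔ c ⊆ Δ.erase ∅ ∧ ∀ s ∈ c, ∀ t ∈ c, s ⊆ t ∨ t ⊆ s := by
  simp [sd, mem_filter, mem_powerset]

private lemma sup_mem_chain : ∀ (s : Finset (Finset α)), s.Nonempty →
    (∀ x ∈ s, ∀ y ∈ s, x ⊆ y ∨ y ⊆ x) → s.sup id ∈ s := by
  intro s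
  induction s using Finset.induction_on with
  | empty => intro h; simp at h
  | @insert a t ha ih =>
    intro _ hc
    rw [Finset.sup_insert]
    rcases Finset.eq_empty_or_nonempty t with rfl | hs
    · simp
    · have hc' : ∀ x ∈ t, ∀ y ∈ t, x ⊆ y ∨ y ⊆ x := fun x hx y hy =>
        hc x (mem_insert_of_mem hx) y (mem_insert_of_mem hy)
      have hmem := ih hs hc'
      rcases hc a (mem_insert_self _ _) (t.sup id) (mem_insert_of_mem hmem) with h | h
      · have : (id a : Finset α) ⊔ t.sup id = t.sup id := sup_eq_right.mpr h
        rw [this]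
        exact mem_insert_of_mem hmem
      · have : (id a : Finset α) ⊔ t.sup id = a := sup_eq_left.mpr h
        rw [this]
        exact mem_insert_self _ _

private lemma sum_powerset_pow (ℓ : ℕ) (F : Finset α) :
    ∑ G ∈ F.powerset, ℓ ^ G.card = (ℓ+1) ^ F.card := by
  induction F using Finset.induction_on with
  | empty => simp
  | @insert a F ha ih =>
    rw [Finset.powerset_insert, Finset.sum_union, Finset.sum_image, card_insert_of_notMem ha]
    · have h1 : ∀ G ∈ F.powerset, ℓ ^ (insert a G).card = ℓ * ℓ ^ G.card := by
        intro G hG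
        rw [mem_powerset] at hG
        have : a ∉ G := fun h => ha (hG h)
        rw [card_insert_of_notMem this, pow_succ]
        ring
      rw [sum_congr rfl h1, ← mul_sum, ih, pow_succ]
      ring
    · intro G hG H hH hGH
      rw [mem_coe, mem_powerset] at hG hH
      have haG : a ∉ G := fun h => ha (hG h)
      have haH : a ∉ H := fun h => ha (hH h)
      have := congrArg (fun s => Finset.erase s a) hGH
      simpa [Finset.erase_insert haG, Finset.erase_insert haH] using this
    · rw [Finset.disjoint_left]
      intro G hG hG2
      rw [mem_powerset] at hG
      rw [mem_image] at hG2
      obtain ⟨H, _, rfl⟩ := hG2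
      exact ha (hG (mem_insert_self a H))

/-- the boundary complex of a face -/
private def bd (S : Finset α) : Finset (Finset α) := S.powerset.erase S

private lemma isComplex_bd {S : Finset α} (hS : S ≠ ∅) : IsComplex (bd S) := by
  constructor
  · rw [bd, mem_erase, mem_powerset]
    exact ⟨fun h => hS h.symm, empty_subset _⟩
  · intro s hs t ht
    rw [bd, mem_erase, mem_powerset] at hs ⊢
    constructor
    · rintro rfl
      exact hs.1 (subset_antisymm hs.2 ht)
    · exact ht.trans hs.2

private lemma master (ℓ : ℕ) : ∀ (Δ : Finset (Finset α)), IsComplex Δ →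
    ∑ c ∈ sd Δ, Nat.choose ℓ c.card = ∑ F ∈ Δ, ℓ ^ F.card := by
  induction ℓ with
  | zero =>
    intro Δ hΔ
    have h1 : ∀ c ∈ sd Δ, Nat.choose 0 c.card = if c = ∅ then 1 else 0 := by
      intro c _
      rcases eq_or_ne c ∅ with rfl | hne
      · simp
      · rw [if_neg hne, Nat.choose_eq_zero_of_lt]
        exact Finset.card_pos.mpr (Finset.nonempty_of_ne_empty hne)
    have h2 : ∀ F ∈ Δ, 0 ^ F.card = if F = ∅ then 1 else 0 := by
      intro F _
      rcases eq_or_ne F ∅ with rfl | hne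
      · simp
      · rw [if_neg hne, zero_pow]
        exact fun h => hne (Finset.card_eq_zero.mp h)
    rw [sum_congr rfl h1, sum_congr rfl h2, Finset.sum_ite_eq' (sd Δ) ∅ (fun _ => 1),
      Finset.sum_ite_eq' Δ ∅ (fun _ => 1)]
    have hsd : ∅ ∈ sd Δ := by
      rw [mem_sd]
      exact ⟨empty_subset _, by simp⟩
    rw [if_pos hsd, if_pos hΔ.1]
  | succ ℓ ih =>
    intro Δ hΔ
    -- Step 1: split the choose sum
    have split : ∀ c ∈ sd Δ, Nat.choose (ℓ+1) c.card
        = Nat.choose ℓ c.card + (if c = ∅ then 0 else Nat.choose ℓ (c.card - 1)) := by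
      intro c _
      rcases eq_or_ne c ∅ with rfl | hne
      · simp
      · rw [if_neg hne]
        have hk : c.card = (c.card - 1) + 1 := by
          have := Finset.card_pos.mpr (Finset.nonempty_of_ne_empty hne)
          omega
        conv_lhs => rw [hk]
        rw [Nat.choose_succ_succ, Nat.succ_eq_add_one, ← hk]
        omega
    rw [sum_congr rfl split, sum_add_distrib]
    -- the "if" sum restricted to nonempty chains
    have hres : ∑ c ∈ sd Δ, (if c = ∅ then 0 else Nat.choose ℓ (c.card - 1))
        = ∑ c ∈ (sd Δ).erase ∅, Nat.choose ℓ (c.card - 1) := by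
      rw [← Finset.sum_erase (sd Δ) (f := fun c => if c = ∅ then 0 else Nat.choose ℓ (c.card - 1))
        (a := ∅) (by simp)]
      apply sum_congr rfl
      intro c hc
      rw [if_neg (Finset.ne_of_mem_erase hc)]
    rw [hres]
    -- Step 2: the bijection
    have bij : ∑ c ∈ (sd Δ).erase ∅, Nat.choose ℓ (c.card - 1)
        = ∑ S ∈ Δ.erase ∅, ∑ c' ∈ sd (bd S), Nat.choose ℓ c'.card := by
      rw [Finset.sum_sigma' (Δ.erase ∅) (fun S => sd (bd S)) (fun _ c' => Nat.choose ℓ c'.card)]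
      apply Finset.sum_nbij' (i := fun c => (⟨c.sup id, c.erase (c.sup id)⟩ : (_ : Finset α) × Finset (Finset α)))
        (j := fun x => insert x.1 x.2)
      · -- hi : chain goes to sigma
        intro c hc
        rw [mem_erase] at hc
        obtain ⟨hcne, hcsd⟩ := hc
        rw [mem_sd] at hcsd
        have hM := sup_mem_chain c (Finset.nonempty_of_ne_empty hcne) hcsd.2
        rw [Finset.mem_sigma]
        constructor
        · exact hcsd.1 hM
        · rw [mem_sd]
          constructor
          · intro t ht
            rw [mem_erase] at ht
            obtain ⟨htM, htc⟩ := ht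
            rw [mem_erase]
            constructor
            · exact (Finset.mem_erase.mp (hcsd.1 htc)).1
            · rw [bd, mem_erase, mem_powerset]
              exact ⟨htM, Finset.le_sup (f := id) htc⟩
          · intro s hs t ht
            exact hcsd.2 s (Finset.mem_of_mem_erase hs) t (Finset.mem_of_mem_erase ht)
      · -- hj : sigma goes to chains
        rintro ⟨S, c'⟩ hx
        rw [Finset.mem_sigma] at hx
        obtain ⟨hS, hc'⟩ := hx
        rw [mem_sd] at hc'
        rw [mem_erase]
        constructor
        · exact Finset.insert_ne_empty _ _
        · rw [mem_sd]
          constructor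
          · intro t ht
            rcases Finset.mem_insert.mp ht with rfl | ht2
            · exact hS
            · have := hc'.1 ht2
              rw [bd, mem_erase] at this
              obtain ⟨htne, ht3⟩ := this
              rw [mem_erase, mem_powerset] at ht3
              rw [mem_erase]
              exact ⟨htne, hΔ.2 S (Finset.mem_of_mem_erase hS) t ht3.2⟩
          · intro s hs t ht
            have hsubS : ∀ u ∈ c', u ⊆ S := by
              intro u hu
              have := hc'.1 hu
              rw [bd, mem_erase, mem_erase, mem_powerset] at this
              exact this.2.2
            rcases Finset.mem_insert.mp hs with rfl | hs2
            · rcases Finset.mem_insert.mp ht with rfl | ht2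
              · left; rfl
              · right; exact hsubS t ht2
            · rcases Finset.mem_insert.mp ht with rfl | ht2
              · left; exact hsubS s hs2
              · exact hc'.2 s hs2 t ht2
      · -- left_inv : insert (sup) (erase) = c
        intro c hc
        rw [mem_erase] at hc
        obtain ⟨hcne, hcsd⟩ := hc
        rw [mem_sd] at hcsd
        have hM := sup_mem_chain c (Finset.nonempty_of_ne_empty hcne) hcsd.2
        exact Finset.insert_erase hM
      · -- right_inv
        rintro ⟨S, c'⟩ hx
        rw [Finset.mem_sigma] at hx
        obtain ⟨hS, hc'⟩ := hx
        rw [mem_sd] at hc'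
        have hSnotin : S ∉ c' := by
          intro hmem
          have := hc'.1 hmem
          rw [bd, mem_erase, mem_erase] at this
          exact this.2.1 rfl
        have hsup : (insert S c').sup id = S := by
          rw [Finset.sup_insert]
          apply sup_eq_left.mpr
          apply Finset.sup_le
          intro u hu
          have := hc'.1 hu
          rw [bd, mem_erase, mem_erase, mem_powerset] at this
          exact this.2.2
        show (⟨(insert S c').sup id, (insert S c').erase ((insert S c').sup id)⟩ :
          (_ : Finset α) × Finset (Finset α)) = ⟨S, c'⟩
        rw [hsup, Finset.erase_insert hSnotin]
      · -- h : summands agree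
        intro c hc
        rw [mem_erase] at hc
        obtain ⟨hcne, hcsd⟩ := hc
        rw [mem_sd] at hcsd
        have hM := sup_mem_chain c (Finset.nonempty_of_ne_empty hcne) hcsd.2
        show Nat.choose ℓ (c.card - 1) = Nat.choose ℓ ((c.erase (c.sup id)).card)
        rw [Finset.card_erase_of_mem hM]
    rw [bij]
    -- apply the inner induction hypotheses
    have inner : ∀ S ∈ Δ.erase ∅, ∑ c' ∈ sd (bd S), Nat.choose ℓ c'.card
        = ∑ G ∈ bd S, ℓ ^ G.card := by
      intro S hS
      exact ih (bd S) (isComplex_bd (Finset.ne_of_mem_erase hS))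
    rw [sum_congr rfl inner, ih Δ hΔ]
    -- Step 3: the face-side identity
    have face : ∀ F ∈ Δ, (ℓ+1) ^ F.card = ℓ ^ F.card + ∑ G ∈ bd F, ℓ ^ G.card := by
      intro F _
      have h := sum_powerset_pow ℓ F
      have h2 : ∑ G ∈ (bd F), ℓ ^ G.card + ℓ ^ F.card = ∑ G ∈ F.powerset, ℓ ^ G.card := by
        rw [bd]
        exact Finset.sum_erase_add _ _ (Finset.mem_powerset_self F)
      omega
    rw [sum_congr rfl face, sum_add_distrib]
    congr 1
    rw [← Finset.sum_erase Δ (f := fun F => ∑ G ∈ bd F, ℓ ^ G.card) (a := ∅) (by simp [bd])]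

end Comb


private lemma chain_card_le {α : Type*} [DecidableEq α] {Δ : Finset (Finset α)} {d : ℕ}
    (hdim : ∀ F ∈ Δ, F.card ≤ d) {c : Finset (Finset α)} (hc : c ∈ sd Δ) : c.card ≤ d := by
  rw [mem_sd] at hc
  have hinj : Set.InjOn Finset.card (c : Set (Finset α)) := by
    intro s hs t ht hst
    rw [Finset.mem_coe] at hs ht
    rcases hc.2 s hs t ht with h | h
    · exact Finset.eq_of_subset_of_card_le h (le_of_eq hst.symm)
    · exact (Finset.eq_of_subset_of_card_le h (le_of_eq hst)).symm
  have h1 : c.card = (c.image Finset.card).card := (Finset.card_image_of_injOn hinj).symm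
  have h2 : c.image Finset.card ⊆ Finset.Icc 1 d := by
    intro k hk
    rw [mem_image] at hk
    obtain ⟨s, hs, rfl⟩ := hk
    have hmem := hc.1 hs
    rw [mem_erase] at hmem
    rw [Finset.mem_Icc]
    exact ⟨Finset.card_pos.mpr (Finset.nonempty_of_ne_empty hmem.1), hdim s hmem.2⟩
  have h3 : (Finset.Icc 1 d).card = d := by
    rw [Nat.card_Icc]
    omega
  calc c.card = (c.image Finset.card).card := h1
    _ ≤ (Finset.Icc 1 d).card := Finset.card_le_card h2
    _ = d := h3

private lemma group_sum {β : Type*} (X : Finset (Finset β)) (d : ℕ)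
    (hX : ∀ s ∈ X, s.card ≤ d) (v : ℕ → ℕ) :
    ∑ s ∈ X, v s.card = ∑ i ∈ range (d+1), fnum X i * v i := by
  rw [← Finset.sum_fiberwise_of_maps_to (g := Finset.card) (t := range (d+1))
    (fun s hs => mem_range.mpr (Nat.lt_succ_of_le (hX s hs))) (fun s => v s.card)]
  apply sum_congr rfl
  intro i _
  have h1 : ∀ s ∈ X.filter (fun s => s.card = i), v s.card = v i := by
    intro s hs
    rw [(Finset.mem_filter.mp hs).2]
  rw [sum_congr rfl h1, Finset.sum_const, fnum, smul_eq_mul]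

private lemma genF1 (d : ℕ) (c : ℕ → ℤ) (j : ℕ) (hj : j ≤ d) :
    ∑ i ∈ range (j+1), (-1:ℤ)^(j-i) * (((d-i).choose (j-i) : ℕ) : ℤ) * c i
    = ∑ r ∈ range (j+1), (-1:ℤ)^r * (((d+1).choose r : ℕ) : ℤ)
        * (∑ i ∈ range (d+1), c i * (((j-r).choose i : ℕ) : ℤ)) := by
  have h1 : ∀ r ∈ range (j+1), (-1:ℤ)^r * (((d+1).choose r : ℕ) : ℤ)
      * (∑ i ∈ range (d+1), c i * (((j-r).choose i : ℕ) : ℤ))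
      = ∑ i ∈ range (d+1), c i * ((-1:ℤ)^r * (((d+1).choose r : ℕ) : ℤ) * (((j-r).choose i : ℕ) : ℤ)) := by
    intro r _
    rw [mul_sum]
    apply sum_congr rfl
    intro i _
    ring
  rw [sum_congr rfl h1, sum_comm]
  have h2 : ∀ i ∈ range (d+1),
      ∑ r ∈ range (j+1), c i * ((-1:ℤ)^r * (((d+1).choose r : ℕ) : ℤ) * (((j-r).choose i : ℕ) : ℤ))
      = c i * (if i ≤ j then (-1:ℤ)^(j-i) * (((d-i).choose (j-i) : ℕ) : ℤ) else 0) := by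
    intro i hi
    rw [mem_range] at hi
    rw [← mul_sum, B2 d j hj i (by omega)]
  rw [sum_congr rfl h2]
  have h3 : ∀ i ∈ range (d+1), c i * (if i ≤ j then (-1:ℤ)^(j-i) * (((d-i).choose (j-i) : ℕ) : ℤ) else 0)
      = if i ≤ j then (-1:ℤ)^(j-i) * (((d-i).choose (j-i) : ℕ) : ℤ) * c i else 0 := by
    intro i _
    by_cases h : i ≤ j
    · rw [if_pos h, if_pos h]; ring
    · rw [if_neg h, if_neg h, mul_zero]
  rw [sum_congr rfl h3, Finset.sum_ite, Finset.sum_const_zero, add_zero]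
  have h4 : (range (d+1)).filter (fun i => i ≤ j) = range (j+1) := by
    apply Finset.ext
    intro k
    simp only [Finset.mem_filter, mem_range]
    omega
  rw [h4]

private lemma kills_lin (d : ℕ) (f : ℕ → ℤ) (q : ℕ → ℤ → ℤ)
    (hq : ∀ i ≤ d, ∀ a : ℤ, ∑ r ∈ range (d+2), (-1:ℤ)^r * (((d+1).choose r : ℕ) : ℤ) * q i (a - r) = 0)
    (a : ℤ) :
    ∑ r ∈ range (d+2), (-1:ℤ)^r * (((d+1).choose r : ℕ) : ℤ)
      * (∑ i ∈ range (d+1), f i * q i (a - r)) = 0 := by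
  have h1 : ∀ r ∈ range (d+2), (-1:ℤ)^r * (((d+1).choose r : ℕ) : ℤ)
      * (∑ i ∈ range (d+1), f i * q i (a - r))
      = ∑ i ∈ range (d+1), f i * ((-1:ℤ)^r * (((d+1).choose r : ℕ) : ℤ) * q i (a - r)) := by
    intro r _
    rw [mul_sum]
    apply sum_congr rfl
    intro i _
    ring
  rw [sum_congr rfl h1, sum_comm]
  apply sum_eq_zero
  intro i hi
  rw [mem_range] at hi
  rw [← mul_sum, hq i (by omega) a, mul_zero]

private lemma genSym (d : ℕ) (p : ℤ → ℤ)
    (hkill : ∀ a : ℤ, ∑ r ∈ range (d+2), (-1:ℤ)^r * (((d+1).choose r : ℕ) : ℤ) * p (a - r) = 0)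
    (j : ℕ) (hj : j ≤ d) :
    (∑ r ∈ range (j+1), (-1:ℤ)^r * (((d+1).choose r : ℕ) : ℤ) * p ((j:ℤ) - r))
    - (∑ r ∈ range (d-j+1), (-1:ℤ)^r * (((d+1).choose r : ℕ) : ℤ) * p (((d-j : ℕ):ℤ) - r))
    = ∑ s ∈ range (j+1), (-1:ℤ)^s * (((d+1).choose s : ℕ) : ℤ)
        * (p ((j:ℤ)-s) - (-1:ℤ)^d * p (-1-((j:ℤ)-s))) := by
  set F : ℕ → ℤ := fun r => (-1:ℤ)^r * (((d+1).choose r : ℕ) : ℤ) * p (((d-j : ℕ):ℤ) - r) with hF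
  have hk := hkill (((d-j : ℕ)):ℤ)
  have hsplit : (∑ r ∈ range (d-j+1), F r) + (∑ r ∈ Finset.Ico (d-j+1) (d+2), F r)
      = ∑ r ∈ range (d+2), F r := by
    rw [Finset.range_eq_Ico, Finset.range_eq_Ico]
    exact Finset.sum_Ico_consecutive F (m := 0) (n := d-j+1) (k := d+2) (by omega) (by omega)
  have hIco : ∑ r ∈ Finset.Ico (d-j+1) (d+2), F r = ∑ s ∈ range (j+1), F (d+1-s) := by
    apply Finset.sum_nbij' (i := fun r => d+1-r) (j := fun s => d+1-s)
    · intro r hr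
      rw [Finset.mem_Ico] at hr
      rw [mem_range]
      omega
    · intro s hs
      rw [mem_range] at hs
      rw [Finset.mem_Ico]
      omega
    · intro r hr
      rw [Finset.mem_Ico] at hr
      omega
    · intro s hs
      rw [mem_range] at hs
      omega
    · intro r hr
      rw [Finset.mem_Ico] at hr
      have : d+1-(d+1-r) = r := by omega
      rw [this]
  have hterm : ∀ s ∈ range (j+1), F (d+1-s)
      = -((-1:ℤ)^s * (((d+1).choose s : ℕ) : ℤ) * ((-1:ℤ)^d * p (-1-((j:ℤ)-s)))) := by
    intro s hs
    rw [mem_range] at hs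
    rw [hF]
    simp only []
    have hch : (d+1).choose (d+1-s) = (d+1).choose s := Nat.choose_symm (by omega)
    have harg : ((d-j : ℕ):ℤ) - ((d+1-s : ℕ):ℤ) = -1-((j:ℤ)-s) := by
      have c1 : ((d-j : ℕ):ℤ) = (d:ℤ) - j := by
        push_cast [Nat.cast_sub hj]
        ring
      have c2 : ((d+1-s : ℕ):ℤ) = (d:ℤ) + 1 - s := by
        push_cast [Nat.cast_sub (show s ≤ d+1 by omega)]
        ring
      rw [c1, c2]
      ring
    have hsign : (-1:ℤ)^(d+1-s) = -((-1:ℤ)^s * (-1:ℤ)^d) := by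
      have h1 : (-1:ℤ)^(d+1-s) * (-1:ℤ)^s = (-1:ℤ)^(d+1) := by
        rw [← pow_add]
        congr 1
        omega
      have h2 : (-1:ℤ)^s * (-1:ℤ)^s = 1 := by
        rw [← pow_add, ← two_mul, pow_mul]
        norm_num
      calc (-1:ℤ)^(d+1-s) = (-1:ℤ)^(d+1-s) * ((-1:ℤ)^s * (-1:ℤ)^s) := by rw [h2, mul_one]
        _ = ((-1:ℤ)^(d+1-s) * (-1:ℤ)^s) * (-1:ℤ)^s := by ring
        _ = (-1:ℤ)^(d+1) * (-1:ℤ)^s := by rw [h1]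
        _ = -((-1:ℤ)^s * (-1:ℤ)^d) := by rw [pow_succ]; ring
    rw [hch, harg, hsign]
    ring
  have hB : ∑ r ∈ range (d-j+1), F r = - ∑ s ∈ range (j+1), F (d+1-s) := by
    rw [← hIco]
    have : ∑ r ∈ range (d+2), F r = 0 := hk
    omega
  rw [hB, sum_congr rfl hterm, sub_neg_eq_add, ← sum_add_distrib]
  apply sum_congr rfl
  intro s _
  ring

private lemma triangular (d : ℕ) (D : ℕ → ℤ)
    (hD : ∀ j ≤ d, ∑ s ∈ range (j+1), (-1:ℤ)^s * (((d+1).choose s : ℕ) : ℤ) * D (j-s) = 0) :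
    ∀ m ≤ d, D m = 0 := by
  intro m
  induction m using Nat.strong_induction_on with
  | _ m IH =>
    intro hm
    have h := hD m hm
    rw [Finset.sum_range_succ'] at h
    have h1 : ∀ s ∈ range m, (-1:ℤ)^(s+1) * (((d+1).choose (s+1) : ℕ) : ℤ) * D (m-(s+1)) = 0 := by
      intro s hs
      rw [mem_range] at hs
      rw [IH (m-(s+1)) (by omega) (by omega), mul_zero]
    rw [sum_congr rfl h1, Finset.sum_const_zero, zero_add] at h
    simpa using h

private lemma inner_orth (r i : ℕ) :
    ∑ s ∈ range (r+1), (-1:ℤ)^s * ((r.choose s : ℕ):ℤ) * (((s+i).choose i : ℕ):ℤ)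
    = (-1:ℤ)^r * ((i.choose r : ℕ):ℤ) := by
  have h1 : ∀ s ∈ range (r+1), (-1:ℤ)^s * ((r.choose s : ℕ):ℤ) * (((s+i).choose i : ℕ):ℤ)
      = ∑ q ∈ range (i+1), ((i.choose q : ℕ):ℤ) * ((-1:ℤ)^s * ((r.choose s : ℕ):ℤ) * ((s.choose q : ℕ):ℤ)) := by
    intro s _
    rw [B4 s i]
    push_cast
    rw [mul_sum]
    apply sum_congr rfl
    intro q _
    ring
  rw [sum_congr rfl h1, sum_comm]
  have h2 : ∀ q ∈ range (i+1), ∑ s ∈ range (r+1),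
      ((i.choose q : ℕ):ℤ) * ((-1:ℤ)^s * ((r.choose s : ℕ):ℤ) * ((s.choose q : ℕ):ℤ))
      = ((i.choose q : ℕ):ℤ) * (if q = r then (-1:ℤ)^r else 0) := by
    intro q _
    rw [← mul_sum, B3 r q]
  rw [sum_congr rfl h2]
  have h3 : ∀ q ∈ range (i+1), ((i.choose q : ℕ):ℤ) * (if q = r then (-1:ℤ)^r else 0)
      = if q = r then ((i.choose q : ℕ):ℤ) * (-1:ℤ)^r else 0 := by
    intro q _
    by_cases h : q = r
    · rw [if_pos h, if_pos h]
    · rw [if_neg h, if_neg h, mul_zero]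
  rw [sum_congr rfl h3, Finset.sum_ite_eq' (range (i+1)) r]
  by_cases hri : r < i + 1
  · rw [if_pos (mem_range.mpr hri)]
    ring
  · rw [if_neg (fun hmem => hri (mem_range.mp hmem)), Nat.choose_eq_zero_of_lt (by omega : i < r)]
    simp

private lemma newton (d : ℕ) (f : ℕ → ℤ)
    (hD : ∀ m : ℕ, m ≤ d →
      (∑ i ∈ range (d+1), f i * ib (m:ℤ) i)
        - (-1:ℤ)^d * (∑ i ∈ range (d+1), f i * ib (-1-(m:ℤ)) i) = 0) :
    ∀ r ≤ d, f r = (-1:ℤ)^d * ∑ i ∈ range (d+1), f i * (-1:ℤ)^i * ((i.choose r : ℕ) : ℤ) := by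
  intro r hr
  have key : ∑ s ∈ range (r+1), (-1:ℤ)^s * ((r.choose s : ℕ):ℤ) *
      ((∑ i ∈ range (d+1), f i * ib (s:ℤ) i)
        - (-1:ℤ)^d * (∑ i ∈ range (d+1), f i * ib (-1-(s:ℤ)) i)) = 0 := by
    apply sum_eq_zero
    intro s hs
    rw [mem_range] at hs
    rw [hD s (by omega), mul_zero]
  have hT1 : ∑ s ∈ range (r+1), (-1:ℤ)^s * ((r.choose s : ℕ):ℤ) *
      (∑ i ∈ range (d+1), f i * ib (s:ℤ) i) = (-1:ℤ)^r * f r := by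
    have e1 : ∀ s ∈ range (r+1), (-1:ℤ)^s * ((r.choose s : ℕ):ℤ) *
        (∑ i ∈ range (d+1), f i * ib (s:ℤ) i)
        = ∑ i ∈ range (d+1), f i * ((-1:ℤ)^s * ((r.choose s : ℕ):ℤ) * ((s.choose i : ℕ):ℤ)) := by
      intro s _
      rw [mul_sum]
      apply sum_congr rfl
      intro i _
      rw [ib_nat]
      ring
    rw [sum_congr rfl e1, sum_comm]
    have e2 : ∀ i ∈ range (d+1),
        ∑ s ∈ range (r+1), f i * ((-1:ℤ)^s * ((r.choose s : ℕ):ℤ) * ((s.choose i : ℕ):ℤ))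
        = if i = r then f i * (-1:ℤ)^r else 0 := by
      intro i _
      rw [← mul_sum, B3 r i]
      by_cases h : i = r
      · rw [if_pos h, if_pos h]
      · rw [if_neg h, if_neg h, mul_zero]
    rw [sum_congr rfl e2, Finset.sum_ite_eq' (range (d+1)) r]
    rw [if_pos (mem_range.mpr (by omega))]
    ring
  have hT2 : ∑ s ∈ range (r+1), (-1:ℤ)^s * ((r.choose s : ℕ):ℤ) *
      (∑ i ∈ range (d+1), f i * ib (-1-(s:ℤ)) i)
      = (-1:ℤ)^r * ∑ i ∈ range (d+1), f i * (-1:ℤ)^i * ((i.choose r : ℕ):ℤ) := by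
    have e1 : ∀ s ∈ range (r+1), (-1:ℤ)^s * ((r.choose s : ℕ):ℤ) *
        (∑ i ∈ range (d+1), f i * ib (-1-(s:ℤ)) i)
        = ∑ i ∈ range (d+1), f i * (-1:ℤ)^i *
            ((-1:ℤ)^s * ((r.choose s : ℕ):ℤ) * (((s+i).choose i : ℕ):ℤ)) := by
      intro s _
      rw [mul_sum]
      apply sum_congr rfl
      intro i _
      rw [ib_neg s i]
      ring
    rw [sum_congr rfl e1, sum_comm]
    have e2 : ∀ i ∈ range (d+1),
        ∑ s ∈ range (r+1), f i * (-1:ℤ)^i *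
          ((-1:ℤ)^s * ((r.choose s : ℕ):ℤ) * (((s+i).choose i : ℕ):ℤ))
        = (-1:ℤ)^r * (f i * (-1:ℤ)^i * ((i.choose r : ℕ):ℤ)) := by
      intro i _
      rw [← mul_sum, inner_orth r i]
      ring
    rw [sum_congr rfl e2, ← mul_sum]
  have e0 : ∀ s ∈ range (r+1), (-1:ℤ)^s * ((r.choose s : ℕ):ℤ) *
      ((∑ i ∈ range (d+1), f i * ib (s:ℤ) i)
        - (-1:ℤ)^d * (∑ i ∈ range (d+1), f i * ib (-1-(s:ℤ)) i))
      = (-1:ℤ)^s * ((r.choose s : ℕ):ℤ) * (∑ i ∈ range (d+1), f i * ib (s:ℤ) i)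
        - (-1:ℤ)^d * ((-1:ℤ)^s * ((r.choose s : ℕ):ℤ) *
            (∑ i ∈ range (d+1), f i * ib (-1-(s:ℤ)) i)) := by
    intro s _
    ring
  rw [sum_congr rfl e0, sum_sub_distrib, ← mul_sum, hT1, hT2, sub_eq_zero] at key
  have hsq : (-1:ℤ)^r * (-1:ℤ)^r = 1 := by
    rw [← pow_add, ← two_mul, pow_mul]
    norm_num
  set S := ∑ i ∈ range (d+1), f i * (-1:ℤ)^i * ((i.choose r : ℕ):ℤ) with hS
  calc f r = (-1:ℤ)^r * ((-1:ℤ)^r * f r) := by rw [← mul_assoc, hsq, one_mul]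
    _ = (-1:ℤ)^r * ((-1:ℤ)^d * ((-1:ℤ)^r * S)) := by rw [key]
    _ = ((-1:ℤ)^r * (-1:ℤ)^r) * ((-1:ℤ)^d * S) := by ring
    _ = (-1:ℤ)^d * S := by rw [hsq, one_mul]

private lemma dphi_zero (d : ℕ) (f : ℕ → ℤ)
    (hP3 : ∀ r ≤ d, f r = (-1:ℤ)^d * ∑ i ∈ range (d+1), f i * (-1:ℤ)^i * ((i.choose r : ℕ):ℤ))
    (m : ℤ) :
    (∑ i ∈ range (d+1), f i * m^i) - (-1:ℤ)^d * (∑ i ∈ range (d+1), f i * (-1-m)^i) = 0 := by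
  have h1 : ∀ i ∈ range (d+1), f i * (-1-m)^i
      = ∑ r ∈ range (d+1), f i * (-1:ℤ)^i * ((i.choose r : ℕ):ℤ) * m^r := by
    intro i hi
    rw [mem_range] at hi
    have e1 : (-1-m : ℤ) = -(m+1) := by ring
    rw [e1, neg_pow]
    have e2 : (m+1)^i = ∑ r ∈ range (i+1), m^r * ((i.choose r : ℕ):ℤ) := by
      have := add_pow m 1 i
      simp only [one_pow, mul_one] at this
      rw [this]
    have e3 : ∑ r ∈ range (i+1), m^r * ((i.choose r : ℕ):ℤ)
        = ∑ r ∈ range (d+1), m^r * ((i.choose r : ℕ):ℤ) := by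
      apply Finset.sum_subset (Finset.range_subset_range.mpr (by omega))
      intro r _ hr
      rw [mem_range] at hr
      rw [Nat.choose_eq_zero_of_lt (by omega : i < r)]
      simp
    rw [e2, e3, mul_sum, mul_sum]
    apply sum_congr rfl
    intro r _
    ring
  rw [sum_congr rfl h1, sum_comm, mul_sum]
  have h2 : ∀ r ∈ range (d+1),
      (-1:ℤ)^d * ∑ i ∈ range (d+1), f i * (-1:ℤ)^i * ((i.choose r : ℕ):ℤ) * m^r
      = f r * m^r := by
    intro r hr
    rw [mem_range] at hr
    have e4 : ∑ i ∈ range (d+1), f i * (-1:ℤ)^i * ((i.choose r : ℕ):ℤ) * m^r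
        = (∑ i ∈ range (d+1), f i * (-1:ℤ)^i * ((i.choose r : ℕ):ℤ)) * m^r := by
      rw [sum_mul]
    rw [e4, ← mul_assoc, ← hP3 r (by omega)]
  rw [sum_congr rfl h2, sub_self]

/-- If the `h`-vector of a `(d-1)`-dimensional simplicial complex is reciprocal
(`h_i = h_{d-i}`), then so is the `h`-vector of its barycentric subdivision. -/
private lemma keyAlg (d : ℕ) (f g : ℕ → ℤ)
    (hM : ∀ ℓ : ℕ, ∑ j' ∈ range (d+1), g j' * ((ℓ.choose j' : ℕ) : ℤ)
        = ∑ i ∈ range (d+1), f i * (ℓ:ℤ)^i)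
    (hrec : ∀ j ≤ d, (∑ i ∈ range (j+1), (-1:ℤ)^(j-i) * (((d-i).choose (j-i) : ℕ) : ℤ) * f i)
        = ∑ i ∈ range ((d-j)+1), (-1:ℤ)^((d-j)-i) * (((d-i).choose ((d-j)-i) : ℕ) : ℤ) * f i) :
    ∀ j ≤ d, (∑ i ∈ range (j+1), (-1:ℤ)^(j-i) * (((d-i).choose (j-i) : ℕ) : ℤ) * g i)
        = ∑ i ∈ range ((d-j)+1), (-1:ℤ)^((d-j)-i) * (((d-i).choose ((d-j)-i) : ℕ) : ℤ) * g i := by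
  set φ : ℤ → ℤ := fun m => ∑ i ∈ range (d+1), f i * m^i with hφ
  set ψ : ℤ → ℤ := fun m => ∑ i ∈ range (d+1), f i * ib m i with hψ
  have hM' : ∀ ℓ : ℕ, ∑ j' ∈ range (d+1), g j' * ((ℓ.choose j' : ℕ) : ℤ) = φ (ℓ:ℤ) := hM
  have S2sd : ∀ j ≤ d,
      (∑ i ∈ range (j+1), (-1:ℤ)^(j-i) * (((d-i).choose (j-i) : ℕ) : ℤ) * g i)
      = ∑ r ∈ range (j+1), (-1:ℤ)^r * (((d+1).choose r : ℕ) : ℤ) * φ ((j:ℤ) - r) := by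
    intro j hj
    rw [genF1 d g j hj]
    apply sum_congr rfl
    intro r hr
    rw [mem_range] at hr
    have harg : (((j - r : ℕ)) : ℤ) = (j:ℤ) - r := by
      push_cast [Nat.cast_sub (show r ≤ j by omega)]
      ring
    rw [← harg, hM' (j - r)]
  have S2Δ : ∀ j ≤ d,
      (∑ i ∈ range (j+1), (-1:ℤ)^(j-i) * (((d-i).choose (j-i) : ℕ) : ℤ) * f i)
      = ∑ r ∈ range (j+1), (-1:ℤ)^r * (((d+1).choose r : ℕ) : ℤ) * ψ ((j:ℤ) - r) := by
    intro j hj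
    rw [genF1 d f j hj]
    apply sum_congr rfl
    intro r hr
    rw [mem_range] at hr
    have harg : (((j - r : ℕ)) : ℤ) = (j:ℤ) - r := by
      push_cast [Nat.cast_sub (show r ≤ j by omega)]
      ring
    have hpsival : ψ (((j - r : ℕ)) : ℤ)
        = ∑ i ∈ range (d+1), f i * (((j-r).choose i : ℕ) : ℤ) := by
      rw [hψ]
      apply sum_congr rfl
      intro i _
      rw [ib_nat]
    rw [← harg, hpsival]
  have killφ : ∀ a : ℤ,
      ∑ r ∈ range (d+2), (-1:ℤ)^r * (((d+1).choose r : ℕ) : ℤ) * φ (a - r) = 0 :=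
    fun a => kills_lin d f (fun i m => m^i) (fun i hi a' => B5a i (d+1) a' (by omega)) a
  have killψ : ∀ a : ℤ,
      ∑ r ∈ range (d+2), (-1:ℤ)^r * (((d+1).choose r : ℕ) : ℤ) * ψ (a - r) = 0 :=
    fun a => kills_lin d f (fun i m => ib m i) (fun i hi a' => B5b i (d+1) a' (by omega)) a
  have hTD : ∀ j ≤ d, ∑ s ∈ range (j+1), (-1:ℤ)^s * (((d+1).choose s : ℕ) : ℤ)
      * (ψ (((j-s : ℕ):ℤ)) - (-1:ℤ)^d * ψ (-1-(((j-s : ℕ):ℤ)))) = 0 := by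
    intro j hj
    have hgen := genSym d ψ killψ j hj
    rw [← S2Δ j hj, ← S2Δ (d-j) (by omega), sub_eq_zero.mpr (hrec j hj)] at hgen
    have hc : ∑ s ∈ range (j+1), (-1:ℤ)^s * (((d+1).choose s : ℕ) : ℤ)
        * (ψ (((j-s : ℕ):ℤ)) - (-1:ℤ)^d * ψ (-1-(((j-s : ℕ):ℤ))))
        = ∑ s ∈ range (j+1), (-1:ℤ)^s * (((d+1).choose s : ℕ) : ℤ)
        * (ψ ((j:ℤ)-s) - (-1:ℤ)^d * ψ (-1-((j:ℤ)-s))) := by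
      apply sum_congr rfl
      intro s hs
      rw [mem_range] at hs
      have harg : (((j - s : ℕ)) : ℤ) = (j:ℤ) - s := by
        push_cast [Nat.cast_sub (show s ≤ j by omega)]
        ring
      rw [harg]
    rw [hc, ← hgen]
  have hDψ0 := triangular d
    (fun m => ψ ((m:ℕ):ℤ) - (-1:ℤ)^d * ψ (-1-((m:ℕ):ℤ))) hTD
  have hP3 := newton d f (fun m hm => hDψ0 m hm)
  have hDφ : ∀ m : ℤ, φ m - (-1:ℤ)^d * φ (-1-m) = 0 := fun m => dphi_zero d f hP3 m
  intro j hj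
  have hgen := genSym d φ killφ j hj
  rw [← S2sd j hj, ← S2sd (d-j) (by omega)] at hgen
  have hzero : ∑ s ∈ range (j+1), (-1:ℤ)^s * (((d+1).choose s : ℕ) : ℤ)
      * (φ ((j:ℤ)-s) - (-1:ℤ)^d * φ (-1-((j:ℤ)-s))) = 0 := by
    apply sum_eq_zero
    intro s _
    rw [hDφ ((j:ℤ)-s), mul_zero]
  rw [hzero] at hgen
  exact sub_eq_zero.mp hgen

theorem hvector_sd_reciprocal {α : Type*} [DecidableEq α] (Δ : Finset (Finset α))
    (d : ℕ) (hΔ : IsComplex Δ) (hdim : HasDim Δ d)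
    (hrec : ∀ i ≤ d, hnum Δ d i = hnum Δ d (d - i)) :
    ∀ j ≤ d, hnum (sd Δ) d j = hnum (sd Δ) d (d - j) := by
  have hM : ∀ ℓ : ℕ, ∑ j' ∈ range (d+1), ((fnum (sd Δ) j' : ℤ)) * ((ℓ.choose j' : ℕ) : ℤ)
      = ∑ i ∈ range (d+1), ((fnum Δ i : ℤ)) * (ℓ:ℤ)^i := by
    intro ℓ
    have hnat := master ℓ Δ hΔ
    have hl : ∑ c ∈ sd Δ, Nat.choose ℓ c.card
        = ∑ j' ∈ range (d+1), fnum (sd Δ) j' * ℓ.choose j' :=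
      group_sum (sd Δ) d (fun c hc => chain_card_le hdim.1 hc) (fun k => ℓ.choose k)
    have hr : ∑ F ∈ Δ, ℓ ^ F.card = ∑ i ∈ range (d+1), fnum Δ i * ℓ^i :=
      group_sum Δ d hdim.1 (fun k => ℓ^k)
    rw [hl, hr] at hnat
    exact_mod_cast congrArg (Nat.cast : ℕ → ℤ) hnat
  exact keyAlg d (fun i => (fnum Δ i : ℤ)) (fun i => (fnum (sd Δ) i : ℤ)) hM hrec
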